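/- arXiv:2306.02151 — 3 statements merged into one kernel-verified Lean document; each statement's English description precedes it below -/
import Mathlib

section
/- Let P be a finite set of points in the plane and Q ⊆ P nonempty. The Hausdorff distance between conv(Q) and conv(P) belongs to the canonical set Ξ = 𝒱 ∪ ℒ, where 𝒱 is the set of pairwise distances ‖x−y‖ for x,y ∈ P, and ℒ is the set of values max_{p ∈ P_{a,b}} dist(p, ℓ_{a,b}) over ordered pairs a,b ∈ P with a ≠ b, where ℓ_{a,b} is the line through a and b and P_{a,b} is the subset of P in the closed halfplane to the left of the directed line ℓ_{a,b} (with the max of the empty set taken as 0). -/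
open Metric
open Metric
open scoped InnerProductSpace

private abbrev E2 := EuclideanSpace ℝ (Fin 2)

private lemma inner_two (x y : E2) : ⟪x, y⟫_ℝ = x 0 * y 0 + x 1 * y 1 := by
  simp [PiLp.inner_apply, RCLike.inner_apply, Fin.sum_univ_two, mul_comm]

private lemma ne_zero_coord {u : E2} (hu : u ≠ 0) : u 0 ≠ 0 ∨ u 1 ≠ 0 := by
  by_contra h
  push_neg at h
  exact hu (by ext i; fin_cases i <;> simp [h.1, h.2])

private lemma exists_smul_of_perp {u v w : E2} (hu : u ≠ 0) (hw : w ≠ 0)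
    (hv : ⟪u, v⟫_ℝ = 0) (hwu : ⟪u, w⟫_ℝ = 0) : ∃ t : ℝ, v = t • w := by
  rw [inner_two] at hv hwu
  have hdet : v 0 * w 1 - v 1 * w 0 = 0 := by
    have h0 : u 0 * (v 0 * w 1 - v 1 * w 0) = 0 := by linear_combination w 1 * hv - v 1 * hwu
    have h1 : u 1 * (v 0 * w 1 - v 1 * w 0) = 0 := by
      linear_combination (-(w 0)) * hv + v 0 * hwu
    rcases ne_zero_coord hu with h | h
    · exact (mul_eq_zero.1 h0).resolve_left h
    · exact (mul_eq_zero.1 h1).resolve_left h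
  rcases ne_zero_coord hw with h | h
  · refine ⟨v 0 / w 0, ?_⟩
    ext i
    fin_cases i <;> simp only [PiLp.smul_apply, smul_eq_mul, Fin.zero_eta, Fin.mk_one]
    · field_simp
    · field_simp
      linear_combination -hdet
  · refine ⟨v 1 / w 1, ?_⟩
    ext i
    fin_cases i <;> simp only [PiLp.smul_apply, smul_eq_mul, Fin.zero_eta, Fin.mk_one]
    · field_simp
      linear_combination hdet
    · field_simp

private lemma line_mem_iff {a b z : E2} :
    z ∈ (affineSpan ℝ ({a, b} : Set E2) : Set E2) ↔ ∃ t : ℝ, z = t • (b - a) + a := by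
  constructor
  · intro h
    have h' : (z - a) +ᵥ a ∈ line[ℝ, a, b] := by simpa [vadd_eq_add] using h
    obtain ⟨r, hr⟩ := vadd_left_mem_affineSpan_pair.1 h'
    exact ⟨r, by rw [vsub_eq_sub] at hr; rw [hr]; abel⟩
  · rintro ⟨t, rfl⟩
    have : t • (b -ᵥ a) +ᵥ a ∈ line[ℝ, a, b] := smul_vsub_vadd_mem_affineSpan_pair t a b
    simpa [vadd_eq_add, vsub_eq_sub] using this

private lemma convexOn_infDist_aux {E : Type*} [NormedAddCommGroup E] [NormedSpace ℝ E]
    {A : Set E} (hA : Convex ℝ A) (hc : IsCompact A) (hne : A.Nonempty) :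
    ConvexOn ℝ Set.univ fun x => Metric.infDist x A := by
  refine ⟨convex_univ, fun x _ y _ t s ht hs hts => ?_⟩
  obtain ⟨ax, hax, haxd⟩ := hc.exists_infDist_eq_dist hne x
  obtain ⟨ay, hay, hayd⟩ := hc.exists_infDist_eq_dist hne y
  have hm : t • ax + s • ay ∈ A := hA hax hay ht hs hts
  have h1 : Metric.infDist (t • x + s • y) A ≤ dist (t • x + s • y) (t • ax + s • ay) :=
    Metric.infDist_le_dist_of_mem hm
  have h2 : dist (t • x + s • y) (t • ax + s • ay) ≤ t * dist x ax + s * dist y ay := by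
    rw [dist_eq_norm, dist_eq_norm, dist_eq_norm]
    have he : (t • x + s • y) - (t • ax + s • ay) = t • (x - ax) + s • (y - ay) := by
      module
    rw [he]
    calc ‖t • (x - ax) + s • (y - ay)‖ ≤ ‖t • (x - ax)‖ + ‖s • (y - ay)‖ := norm_add_le _ _
      _ = t * ‖x - ax‖ + s * ‖y - ay‖ := by
          rw [norm_smul, norm_smul, Real.norm_of_nonneg ht, Real.norm_of_nonneg hs]
  simp only [smul_eq_mul]
  rw [haxd, hayd]
  linarith

private lemma le_infDist_of {X : Type*} [PseudoMetricSpace X] {s : Set X} (hs : s.Nonempty)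
    {x : X} {d : ℝ} (h : ∀ y ∈ s, d ≤ dist x y) : d ≤ Metric.infDist x s := by
  rw [Metric.infDist_eq_iInf]
  haveI : Nonempty s := hs.to_subtype
  exact le_ciInf fun y => h y y.2


/-- `p` lies in the closed halfplane to the left of the line through `a` and `b`,
directed from `a` to `b`. -/
def IsLeftOf (a b p : EuclideanSpace ℝ (Fin 2)) : Prop :=
  0 ≤ (b 0 - a 0) * (p 1 - a 1) - (b 1 - a 1) * (p 0 - a 0)

/-- The set `𝒱` of pairwise distances of points of `P`. -/
def pairwiseDists (P : Finset (EuclideanSpace ℝ (Fin 2))) : Set ℝ :=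
  {d | ∃ x ∈ P, ∃ y ∈ P, d = dist x y}

/-- The set `ℒ` of values `max_{p ∈ P_{a,b}} dist(p, ℓ_{a,b})` over ordered pairs
`a ≠ b` of points of `P`, where `ℓ_{a,b}` is the line through `a` and `b` and `P_{a,b}`
is the subset of `P` in the closed halfplane to the left of the directed line
(the maximum of the empty set being `0`, as `sSup ∅ = 0` in `ℝ`). -/
def lineDists (P : Finset (EuclideanSpace ℝ (Fin 2))) : Set ℝ :=
  {d | ∃ a ∈ P, ∃ b ∈ P, a ≠ b ∧
    d = sSup ((fun p => Metric.infDist p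
        (affineSpan ℝ ({a, b} : Set (EuclideanSpace ℝ (Fin 2))) :
          Set (EuclideanSpace ℝ (Fin 2)))) ''
      {p | p ∈ P ∧ IsLeftOf a b p})}

set_option maxHeartbeats 1600000 in
/-- The Hausdorff distance between `conv Q` and `conv P` lies in the canonical set
`Ξ = 𝒱 ∪ ℒ`. -/
theorem hausdorffDist_mem_canonical_set
    (P Q : Finset (EuclideanSpace ℝ (Fin 2)))
    (hQP : (Q : Set (EuclideanSpace ℝ (Fin 2))) ⊆ P) (hQ : Q.Nonempty) :
    Metric.hausdorffDist (convexHull ℝ (Q : Set (EuclideanSpace ℝ (Fin 2))))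
        (convexHull ℝ (P : Set (EuclideanSpace ℝ (Fin 2))))
      ∈ pairwiseDists P ∪ lineDists P := by
  classical
  set A : Set E2 := convexHull ℝ (Q : Set E2) with hAdef
  set B : Set E2 := convexHull ℝ (P : Set E2) with hBdef
  obtain ⟨q0, hq0⟩ := hQ
  have hPne : P.Nonempty := ⟨q0, hQP hq0⟩
  have hAne : A.Nonempty := ⟨q0, subset_convexHull ℝ _ hq0⟩
  have hBne : B.Nonempty := ⟨q0, subset_convexHull ℝ _ (hQP hq0)⟩
  have hAB : A ⊆ B := convexHull_mono hQP
  have hAc : IsCompact A := Q.finite_toSet.isCompact_convexHull ℝ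
  have hBc : IsCompact B := P.finite_toSet.isCompact_convexHull ℝ
  have hconvA : Convex ℝ A := convex_convexHull ℝ _
  have hfin : EMetric.hausdorffEdist A B ≠ ⊤ :=
    Metric.hausdorffEdist_ne_top_of_nonempty_of_bounded hAne hBne hAc.isBounded hBc.isBounded
  obtain ⟨p, hpP, hpmax⟩ := P.exists_max_image (fun x => infDist x A) hPne
  set D : ℝ := infDist p A with hDdef
  have hDH : hausdorffDist A B = D := by
    refine le_antisymm (hausdorffDist_le_of_mem_dist ?_ ?_ ?_) ?_
    · exact Metric.infDist_nonneg
    · intro x hx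
      exact ⟨x, hAB hx, by rw [dist_self]; exact Metric.infDist_nonneg⟩
    · intro x hx
      obtain ⟨y, hyP, hyle⟩ :=
        (convexOn_infDist_aux hconvA hAc hAne).exists_ge_of_mem_convexHull
          (Set.subset_univ _) hx
      obtain ⟨z, hzA, hz⟩ := hAc.exists_infDist_eq_dist hAne x
      exact ⟨z, hzA, by rw [← hz]; exact le_trans hyle (hpmax y hyP)⟩
    · rw [hausdorffDist_comm]
      exact infDist_le_hausdorffDist_of_mem (subset_convexHull ℝ _ hpP)
        (by rwa [EMetric.hausdorffEdist_comm])
  obtain ⟨q, hqA, hpq⟩ := hAc.exists_infDist_eq_dist hAne p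
  by_cases hpq0 : p = q
  · left
    exact ⟨p, hpP, p, hpP, by rw [hDH, hDdef, hpq, ← hpq0]⟩
  have hu : p - q ≠ 0 := sub_ne_zero.2 hpq0
  set u : E2 := p - q with hudef
  have hvar : ∀ y ∈ A, ⟪u, y - q⟫_ℝ ≤ 0 := by
    have hinf : ‖p - q‖ = ⨅ w : A, ‖p - w‖ := by
      have h1 : infDist p A = ⨅ y : A, dist p y := infDist_eq_iInf
      rw [hpq] at h1
      simpa only [dist_eq_norm] using h1
    exact (norm_eq_iInf_iff_real_inner_le_zero hconvA hqA).1 hinf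
  have hyle : ∀ y ∈ A, ⟪u, y⟫_ℝ ≤ ⟪u, q⟫_ℝ := by
    intro y hy
    have := hvar y hy
    rw [inner_sub_right] at this
    linarith
  obtain ⟨w, hw0, hw1, hwq⟩ := Finset.mem_convexHull'.1 hqA
  have hformula : ∑ y ∈ Q, w y * ⟪u, y⟫_ℝ = ⟪u, q⟫_ℝ := by
    rw [← hwq, inner_sum]
    exact Finset.sum_congr rfl fun y _ => (real_inner_smul_right u y (w y)).symm
  have hkey : ∀ y ∈ Q, w y ≠ 0 → ⟪u, y⟫_ℝ = ⟪u, q⟫_ℝ := by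
    intro y hy hwy
    have hsum0 : ∑ z ∈ Q, w z * (⟪u, q⟫_ℝ - ⟪u, z⟫_ℝ) = 0 := by
      simp only [mul_sub]
      rw [Finset.sum_sub_distrib, ← Finset.sum_mul, hw1, hformula]
      ring
    have heach := (Finset.sum_eq_zero_iff_of_nonneg (fun z hz =>
      mul_nonneg (hw0 z hz) (sub_nonneg.2 (hyle z (subset_convexHull ℝ _ hz))))).1 hsum0 y hy
    rcases mul_eq_zero.1 heach with h | h
    · exact absurd h hwy
    · linarith [sub_eq_zero.1 h]
  set Q' : Finset E2 := Q.filter (fun x => ⟪u, x⟫_ℝ = ⟪u, q⟫_ℝ) with hQ'def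
  have hQ'mem : ∀ y : E2, y ∈ Q' ↔ y ∈ Q ∧ ⟪u, y⟫_ℝ = ⟪u, q⟫_ℝ := by
    intro y
    rw [hQ'def]
    exact Finset.mem_filter
  have hq' : q ∈ convexHull ℝ (Q' : Set E2) := by
    apply Finset.mem_convexHull'.2
    refine ⟨w, fun y hy => hw0 y ((hQ'mem y).1 hy).1, ?_, ?_⟩
    · rw [← hw1, hQ'def]
      exact Finset.sum_subset (Finset.filter_subset _ _) (fun y hy hyn => by
        by_contra h
        exact hyn (Finset.mem_filter.2 ⟨hy, hkey y hy h⟩))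
    · rw [← hwq, hQ'def]
      refine Finset.sum_subset (Finset.filter_subset _ _) (fun y hy hyn => ?_)
      have hwy : w y = 0 := by
        by_contra h
        exact hyn (Finset.mem_filter.2 ⟨hy, hkey y hy h⟩)
      rw [hwy, zero_smul]
  by_cases hqQ : q ∈ Q
  · left
    exact ⟨p, hpP, q, hQP hqQ, by rw [hDH, hDdef, hpq]⟩
  have hQ'ne : Q'.Nonempty := by
    by_contra h
    rw [Finset.not_nonempty_iff_eq_empty] at h
    rw [h] at hq'
    simp at hq'
  have hcard : 1 < Q'.card := by
    by_contra h
    push_neg at h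
    have hc1 : Q'.card = 1 := le_antisymm h (Finset.card_pos.2 hQ'ne)
    obtain ⟨a, ha⟩ := Finset.card_eq_one.1 hc1
    rw [ha] at hq'
    simp only [Finset.coe_singleton, convexHull_singleton, Set.mem_singleton_iff] at hq'
    have hqQ' : q ∈ Q' := by rw [ha, hq']; exact Finset.mem_singleton_self a
    exact hqQ ((hQ'mem q).1 hqQ').1
  obtain ⟨a, haQ', b, hbQ', hab⟩ := Finset.one_lt_card.1 hcard
  have main : ∀ a b : E2, a ∈ Q' → b ∈ Q' → a ≠ b → IsLeftOf a b p →
      hausdorffDist A B ∈ lineDists P := by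
    intro a b haQ' hbQ' hab hleft
    have hma : ⟪u, a⟫_ℝ = ⟪u, q⟫_ℝ := ((hQ'mem a).1 haQ').2
    have hmb : ⟪u, b⟫_ℝ = ⟪u, q⟫_ℝ := ((hQ'mem b).1 hbQ').2
    have haP : a ∈ P := by
      have haQ : a ∈ Q := ((hQ'mem a).1 haQ').1
      exact_mod_cast hQP haQ
    have hbP : b ∈ P := by
      have hbQ : b ∈ Q := ((hQ'mem b).1 hbQ').1
      exact_mod_cast hQP hbQ
    set ℓ : Set E2 := (affineSpan ℝ ({a, b} : Set E2) : Set E2) with hℓdef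
    have hba : ⟪u, b - a⟫_ℝ = 0 := by rw [inner_sub_right, hma, hmb]; ring
    have hqa : ⟪u, q - a⟫_ℝ = 0 := by rw [inner_sub_right, hma]; ring
    have hwne : b - a ≠ 0 := sub_ne_zero.2 hab.symm
    have hql : q ∈ ℓ := by
      obtain ⟨t, ht⟩ := exists_smul_of_perp hu hwne hqa hba
      exact line_mem_iff.2 ⟨t, by rw [← ht]; abel⟩
    have hl_inner : ∀ z ∈ ℓ, ⟪u, z⟫_ℝ = ⟪u, q⟫_ℝ := by
      intro z hz
      obtain ⟨t, rfl⟩ := line_mem_iff.1 hz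
      rw [inner_add_right, real_inner_smul_right, hba, hma]
      ring
    have hplD : infDist p ℓ = dist p q := by
      apply le_antisymm (infDist_le_dist_of_mem hql)
      apply le_infDist_of ⟨q, hql⟩
      intro y hy
      have h0 : ⟪u, y - q⟫_ℝ = 0 := by rw [inner_sub_right, hl_inner y hy]; ring
      have hexp : ‖p - y‖ ^ 2 = ‖u‖ ^ 2 - 2 * ⟪u, y - q⟫_ℝ + ‖y - q‖ ^ 2 := by
        rw [show p - y = u - (y - q) by rw [hudef]; abel]
        exact norm_sub_sq_real u (y - q)
      have hge : ‖u‖ ≤ ‖p - y‖ := by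
        nlinarith [norm_nonneg (p - y), norm_nonneg (y - q), norm_nonneg u]
      calc dist p q = ‖u‖ := by rw [dist_eq_norm]
        _ ≤ ‖p - y‖ := hge
        _ = dist p y := (dist_eq_norm p y).symm
    have hperp : u 0 * (b 0 - a 0) + u 1 * (b 1 - a 1) = 0 := by
      have h := hba
      rw [inner_two] at h
      simpa [PiLp.sub_apply] using h
    have hnu : ‖u‖ ^ 2 = u 0 ^ 2 + u 1 ^ 2 := by
      rw [← real_inner_self_eq_norm_sq, inner_two]; ring
    set κ : ℝ := (b 0 - a 0) * u 1 - (b 1 - a 1) * u 0 with hκdef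
    have hid : ∀ z : E2, ‖u‖ ^ 2 * ((b 0 - a 0) * (z 1 - a 1) - (b 1 - a 1) * (z 0 - a 0))
        = κ * ⟪u, z - a⟫_ℝ := by
      intro z
      rw [inner_two, hnu, hκdef]
      simp only [PiLp.sub_apply]
      linear_combination (u 0 * (z 1 - a 1) - u 1 * (z 0 - a 0)) * hperp
    have hupos : (0:ℝ) < ‖u‖ := norm_pos_iff.2 hu
    have hinnerpa : ⟪u, p - a⟫_ℝ = ‖u‖ ^ 2 := by
      rw [show p - a = u + (q - a) by rw [hudef]; abel, inner_add_right, hqa,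
        real_inner_self_eq_norm_sq]
      ring
    have hcp : 0 ≤ (b 0 - a 0) * (p 1 - a 1) - (b 1 - a 1) * (p 0 - a 0) := hleft
    have hκpos : 0 < κ := by
      have hκne : κ ≠ 0 := by
        intro hκ0
        rw [hκdef] at hκ0
        have hu2 : 0 < u 0 ^ 2 + u 1 ^ 2 := by
          rcases ne_zero_coord hu with h | h <;> positivity
        have hb0 : (u 0 ^ 2 + u 1 ^ 2) * (b 0 - a 0) = 0 := by
          linear_combination u 0 * hperp + u 1 * hκ0
        have hb1 : (u 0 ^ 2 + u 1 ^ 2) * (b 1 - a 1) = 0 := by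
          linear_combination u 1 * hperp - u 0 * hκ0
        apply hwne
        have e0 : b 0 - a 0 = 0 := (mul_eq_zero.1 hb0).resolve_left (ne_of_gt hu2)
        have e1 : b 1 - a 1 = 0 := (mul_eq_zero.1 hb1).resolve_left (ne_of_gt hu2)
        ext i
        fin_cases i <;> simp only [PiLp.sub_apply, PiLp.zero_apply]
        · exact e0
        · exact e1
      have h0 := hid p
      rw [hinnerpa] at h0
      rcases hκne.lt_or_gt with hneg | hpos
      · exfalso
        nlinarith [pow_pos hupos 2]
      · exact hpos
    have hbound : ∀ x : E2, x ∈ P → IsLeftOf a b x → infDist x ℓ ≤ D := by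
      intro x hxP hxl
      have hcx : 0 ≤ (b 0 - a 0) * (x 1 - a 1) - (b 1 - a 1) * (x 0 - a 0) := hxl
      have hex : 0 ≤ ⟪u, x - a⟫_ℝ := by
        have h0 := hid x
        nlinarith [mul_nonneg (le_of_lt (pow_pos hupos 2)) hcx]
      have h5a : ⟪u, x - a⟫_ℝ / ‖u‖ ≤ infDist x A := by
        apply le_infDist_of hAne
        intro y hy
        have hay : ⟪u, a - y⟫_ℝ = ⟪u, q⟫_ℝ - ⟪u, y⟫_ℝ := by
          rw [inner_sub_right, hma]
        have h1 : ⟪u, x - y⟫_ℝ = ⟪u, x - a⟫_ℝ + (⟪u, q⟫_ℝ - ⟪u, y⟫_ℝ) := by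
          rw [show x - y = (x - a) + (a - y) by abel, inner_add_right, hay]
        have h2 : ⟪u, x - a⟫_ℝ ≤ ⟪u, x - y⟫_ℝ := by
          have := hyle y hy
          linarith
        have h3 : ⟪u, x - y⟫_ℝ ≤ ‖u‖ * ‖x - y‖ := real_inner_le_norm u (x - y)
        rw [dist_eq_norm, div_le_iff₀ hupos]
        nlinarith
      have hy0 : x - (⟪u, x - a⟫_ℝ / ‖u‖ ^ 2) • u ∈ ℓ := by
        have hza : ⟪u, (x - (⟪u, x - a⟫_ℝ / ‖u‖ ^ 2) • u) - a⟫_ℝ = 0 := by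
          rw [show (x - (⟪u, x - a⟫_ℝ / ‖u‖ ^ 2) • u) - a
              = (x - a) - (⟪u, x - a⟫_ℝ / ‖u‖ ^ 2) • u by abel,
            inner_sub_right, real_inner_smul_right, real_inner_self_eq_norm_sq]
          field_simp
          ring
        obtain ⟨t, ht⟩ := exists_smul_of_perp hu hwne hza hba
        exact line_mem_iff.2 ⟨t, by rw [← ht]; abel⟩
      have h5b : infDist x ℓ ≤ ⟪u, x - a⟫_ℝ / ‖u‖ := by
        calc infDist x ℓ ≤ dist x (x - (⟪u, x - a⟫_ℝ / ‖u‖ ^ 2) • u) :=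
              infDist_le_dist_of_mem hy0
          _ = ‖(⟪u, x - a⟫_ℝ / ‖u‖ ^ 2) • u‖ := by rw [dist_eq_norm]; congr 1; abel
          _ = ⟪u, x - a⟫_ℝ / ‖u‖ := by
              rw [norm_smul, Real.norm_of_nonneg (div_nonneg hex (by positivity))]
              field_simp
      calc infDist x ℓ ≤ ⟪u, x - a⟫_ℝ / ‖u‖ := h5b
        _ ≤ infDist x A := h5a
        _ ≤ D := hpmax x hxP
    refine ⟨a, haP, b, hbP, hab, ?_⟩
    have hDT : D ∈ (fun x => infDist x ℓ) '' {x | x ∈ P ∧ IsLeftOf a b x} :=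
      ⟨p, ⟨hpP, hleft⟩, by simp only; rw [hplD, hDdef, hpq]⟩
    have hub : ∀ v ∈ (fun x => infDist x ℓ) '' {x | x ∈ P ∧ IsLeftOf a b x}, v ≤ D := by
      rintro v ⟨x, ⟨hxP, hxl⟩, rfl⟩
      exact hbound x hxP hxl
    rw [hDH]
    exact (le_antisymm (csSup_le ⟨D, hDT⟩ hub) (le_csSup ⟨D, hub⟩ hDT)).symm
  rcases (show IsLeftOf a b p ∨ IsLeftOf b a p by
      unfold IsLeftOf
      have hid2 : (a 0 - b 0) * (p 1 - b 1) - (a 1 - b 1) * (p 0 - b 0) =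
          -((b 0 - a 0) * (p 1 - a 1) - (b 1 - a 1) * (p 0 - a 0)) := by ring
      rcases le_total 0 ((b 0 - a 0) * (p 1 - a 1) - (b 1 - a 1) * (p 0 - a 0)) with h | h
      · exact Or.inl h
      · exact Or.inr (by rw [hid2]; linarith)) with h | h
  · exact Or.inr (main a b haQ' hbQ' hab h)
  · exact Or.inr (main b a hbQ' haQ' hab.symm h)
end

section
/- Let P be a finite point set in the plane, k ≥ 1, and let r⋆ = r⋆(P,k) > 0 be the optimal Hausdorff distance over subsets of size at most k, achieved by Q⋆. Let p ∈ P maximize dist(p, conv(Q⋆)) and let q be the nearest point of conv(Q⋆) to p. Then either r⋆ = ‖p − q′‖ for some q′ ∈ P (when q is a vertex of conv(Q⋆)), or r⋆ = dist(p, ℓ) where ℓ is a line through two points of P and p is the farthest point of P from ℓ among points of P in the closed halfplane bounded by ℓ not containing the interior of conv(Q⋆). -/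
open Metric
open RealInnerProductSpace

/-- In `ℝ²`, two vectors orthogonal to the same nonzero vector are parallel. -/
lemma aux_orth_two_dim {u v w : EuclideanSpace ℝ (Fin 2)} (hu : u ≠ 0) (hw : w ≠ 0)
    (hwu : ⟪u, w⟫ = 0) (hvu : ⟪u, v⟫ = 0) : ∃ c : ℝ, c • w = v := by
  haveI : Fact (Module.finrank ℝ (EuclideanSpace ℝ (Fin 2)) = 1 + 1) :=
    ⟨by simp [finrank_euclideanSpace_fin]⟩
  have hdim : Module.finrank ℝ ((ℝ ∙ u)ᗮ : Submodule ℝ (EuclideanSpace ℝ (Fin 2))) = 1 :=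
    Submodule.finrank_orthogonal_span_singleton hu
  have hwK : w ∈ (ℝ ∙ u)ᗮ := Submodule.mem_orthogonal_singleton_iff_inner_right.2 hwu
  have hvK : v ∈ (ℝ ∙ u)ᗮ := Submodule.mem_orthogonal_singleton_iff_inner_right.2 hvu
  have hwne : (⟨w, hwK⟩ : (ℝ ∙ u)ᗮ) ≠ 0 := by simpa [Submodule.mk_eq_zero] using hw
  obtain ⟨c, hc⟩ := (finrank_eq_one_iff_of_nonzero' (⟨w, hwK⟩ : (ℝ ∙ u)ᗮ) hwne).1 hdim ⟨v, hvK⟩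
  exact ⟨c, congrArg Subtype.val hc⟩

set_option maxHeartbeats 1000000 in
/-- Structure of the optimal value: if `Q⋆ ⊆ P`, `|Q⋆| ≤ k`, attains the optimal Hausdorff
distance `r⋆ > 0` among subsets of size at most `k`, `p ∈ P` maximizes the distance to
`conv Q⋆`, and `q` is the nearest point of `conv Q⋆` to `p`, then either `r⋆` is the
distance from `p` to a point of `P`, or `r⋆ = dist(p, ℓ)` for a line `ℓ` through two points
of `P`, where `p` is farthest from `ℓ` among the points of `P` in the closed halfplane
bounded by `ℓ` not containing the interior of `conv Q⋆`. -/
theorem optimal_value_is_canonical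
    (P Qs : Finset (EuclideanSpace ℝ (Fin 2)))
    (hQP : Qs ⊆ P) (hQne : Qs.Nonempty) (k : ℕ) (hk : 1 ≤ k) (hcard : Qs.card ≤ k)
    (rs : ℝ)
    (hrs : rs = Metric.hausdorffDist (convexHull ℝ (Qs : Set (EuclideanSpace ℝ (Fin 2))))
      (convexHull ℝ (P : Set (EuclideanSpace ℝ (Fin 2)))))
    (hpos : 0 < rs)
    (hopt : ∀ Q' : Finset (EuclideanSpace ℝ (Fin 2)), Q'.Nonempty → Q' ⊆ P → Q'.card ≤ k →
      rs ≤ Metric.hausdorffDist (convexHull ℝ (Q' : Set (EuclideanSpace ℝ (Fin 2))))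
        (convexHull ℝ (P : Set (EuclideanSpace ℝ (Fin 2)))))
    (p q : EuclideanSpace ℝ (Fin 2)) (hp : p ∈ P)
    (hmax : ∀ p' ∈ P,
      Metric.infDist p' (convexHull ℝ (Qs : Set (EuclideanSpace ℝ (Fin 2)))) ≤
        Metric.infDist p (convexHull ℝ (Qs : Set (EuclideanSpace ℝ (Fin 2)))))
    (hqmem : q ∈ convexHull ℝ (Qs : Set (EuclideanSpace ℝ (Fin 2))))
    (hqnear : dist p q =
      Metric.infDist p (convexHull ℝ (Qs : Set (EuclideanSpace ℝ (Fin 2))))) :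
    (∃ q' ∈ P, rs = dist p q') ∨
      ∃ a ∈ P, ∃ b ∈ P, a ≠ b ∧
        rs = Metric.infDist p (affineSpan ℝ ({a, b} : Set (EuclideanSpace ℝ (Fin 2))) :
            Set (EuclideanSpace ℝ (Fin 2))) ∧
        ∀ p' ∈ P,
          (∀ x ∈ convexHull ℝ (Qs : Set (EuclideanSpace ℝ (Fin 2))),
            ¬ (affineSpan ℝ ({a, b} : Set (EuclideanSpace ℝ (Fin 2)))).SSameSide p' x) →
          Metric.infDist p' (affineSpan ℝ ({a, b} : Set (EuclideanSpace ℝ (Fin 2))) :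
              Set (EuclideanSpace ℝ (Fin 2))) ≤
            Metric.infDist p (affineSpan ℝ ({a, b} : Set (EuclideanSpace ℝ (Fin 2))) :
              Set (EuclideanSpace ℝ (Fin 2))) := by
  classical
  set C : Set (EuclideanSpace ℝ (Fin 2)) := convexHull ℝ (Qs : Set (EuclideanSpace ℝ (Fin 2)))
    with hCdef
  have hCconv : Convex ℝ C := convex_convexHull ℝ _
  have hCne : C.Nonempty := ⟨q, hqmem⟩
  have hCcompact : IsCompact C := Qs.finite_toSet.isCompact_convexHull ℝ
  have hPcompact : IsCompact (convexHull ℝ (P : Set (EuclideanSpace ℝ (Fin 2)))) :=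
    P.finite_toSet.isCompact_convexHull ℝ
  have hpP : p ∈ convexHull ℝ (P : Set (EuclideanSpace ℝ (Fin 2))) :=
    subset_convexHull ℝ _ hp
  have hPne : (convexHull ℝ (P : Set (EuclideanSpace ℝ (Fin 2)))).Nonempty := ⟨p, hpP⟩
  have hfin : EMetric.hausdorffEdist C (convexHull ℝ (P : Set (EuclideanSpace ℝ (Fin 2)))) ≠ ⊤ :=
    hausdorffEdist_ne_top_of_nonempty_of_bounded hCne hPne hCcompact.isBounded
      hPcompact.isBounded
  have hsub : C ⊆ convexHull ℝ (P : Set (EuclideanSpace ℝ (Fin 2))) :=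
    convexHull_mono (by exact_mod_cast hQP)
  -- Step 1: `rs = dist p q = infDist p C`
  have hr1 : infDist p C ≤ rs := by
    rw [hrs, hausdorffDist_comm]
    exact infDist_le_hausdorffDist_of_mem hpP (by rwa [EMetric.hausdorffEdist_comm])
  have hr2 : rs ≤ infDist p C := by
    rw [hrs]
    have h0 : (0:ℝ) ≤ infDist p C := infDist_nonneg
    refine hausdorffDist_le_of_infDist h0 (fun x hx => ?_) (fun x hx => ?_)
    · simp [infDist_zero_of_mem (hsub hx), h0]
    · have hthick : convexHull ℝ (P : Set (EuclideanSpace ℝ (Fin 2))) ⊆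
          cthickening (infDist p C) C := by
        refine convexHull_min (fun y hy => ?_) (hCconv.cthickening _)
        rw [mem_cthickening_iff]
        have h1 : infDist y C ≤ infDist p C := hmax y hy
        have h2 : infEDist y C ≠ ⊤ := Metric.infEdist_ne_top hCne
        rw [← ENNReal.ofReal_toReal h2]
        exact ENNReal.ofReal_le_ofReal h1
      have := hthick hx
      rw [mem_cthickening_iff, ENNReal.le_ofReal_iff_toReal_le (Metric.infEdist_ne_top hCne) h0]
        at this
      exact this
  have hiC : infDist p C = dist p q := hqnear.symm
  have hrpq : rs = dist p q := by rw [hqnear]; exact le_antisymm hr2 hr1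
  -- Step 2: the obtuse-angle criterion for the nearest point `q`
  have hiInf : ‖p - q‖ = ⨅ w : C, ‖p - w‖ := by
    rw [← dist_eq_norm, hqnear, infDist_eq_iInf]
    simp only [dist_eq_norm]
  have hobtuse : ∀ x ∈ C, ⟪p - q, x - q⟫ ≤ 0 :=
    (norm_eq_iInf_iff_real_inner_le_zero hCconv hqmem).1 hiInf
  have hu : p - q ≠ 0 := by
    intro h
    rw [sub_eq_zero] at h
    rw [h, dist_self] at hrpq
    exact absurd hrpq (ne_of_gt hpos)
  -- Step 3: `q` is a vertex, or lies on a segment between two points of `Qs`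
  have hstruct : (q ∈ Qs) ∨ ∃ a ∈ Qs, ∃ b ∈ Qs, a ≠ b ∧
      ⟪p - q, a - q⟫ = 0 ∧ ⟪p - q, b - q⟫ = 0 := by
    have hqmem' := hqmem
    rw [hCdef, Finset.convexHull_eq] at hqmem'
    obtain ⟨w, hw0, hw1, hwq⟩ := hqmem'
    rw [Finset.centerMass_eq_of_sum_1 _ _ hw1] at hwq
    simp only [id] at hwq
    set T : Finset (EuclideanSpace ℝ (Fin 2)) := Qs.filter (fun y => w y ≠ 0) with hT
    have hTsub : T ⊆ Qs := Finset.filter_subset _ _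
    have hTpos : ∀ y ∈ T, 0 < w y := by
      intro y hy
      rw [hT, Finset.mem_filter] at hy
      exact lt_of_le_of_ne (hw0 y hy.1) (Ne.symm hy.2)
    have hT1 : ∑ y ∈ T, w y = 1 := by
      rw [hT, Finset.sum_filter_ne_zero]; exact hw1
    have hTq : ∑ y ∈ T, w y • y = q := by
      rw [← hwq, hT, Finset.sum_filter_of_ne]
      intro x _ hne hx
      exact hne (by rw [hx, zero_smul])
    have hTne : T.Nonempty := by
      rcases Finset.eq_empty_or_nonempty T with h | h
      · exfalso; rw [h, Finset.sum_empty] at hT1; norm_num at hT1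
      · exact h
    have hsum0 : ∑ y ∈ T, w y • (y - q) = 0 := by
      have : ∑ y ∈ T, w y • (y - q) = (∑ y ∈ T, w y • y) - (∑ y ∈ T, w y) • q := by
        rw [Finset.sum_smul, ← Finset.sum_sub_distrib]
        congr 1; ext y; rw [smul_sub]
      rw [this, hTq, hT1, one_smul, sub_self]
    have hzero : ∀ y ∈ T, ⟪p - q, y - q⟫ = 0 := by
      have hsum : ∑ y ∈ T, w y * ⟪p - q, y - q⟫ = 0 := by
        have : ∑ y ∈ T, w y * ⟪p - q, y - q⟫ = ⟪p - q, ∑ y ∈ T, w y • (y - q)⟫ := by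
          rw [inner_sum]
          congr 1; ext y; rw [real_inner_smul_right]
        rw [this, hsum0, inner_zero_right]
      intro y hy
      have heach : ∀ z ∈ T, w z * ⟪p - q, z - q⟫ ≤ 0 := fun z hz =>
        mul_nonpos_of_nonneg_of_nonpos (hTpos z hz).le
          (hobtuse z (subset_convexHull ℝ _ (hTsub hz)))
      have := (Finset.sum_eq_zero_iff_of_nonpos heach).1 hsum y hy
      rcases mul_eq_zero.1 this with h | h
      · exact absurd h (hTpos y hy).ne'
      · exact h
    rcases eq_or_lt_of_le (Finset.one_le_card.2 hTne) with hcard1 | hcard1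
    · left
      obtain ⟨a, ha⟩ := Finset.card_eq_one.1 hcard1.symm
      have hwa : w a = 1 := by rw [ha, Finset.sum_singleton] at hT1; exact hT1
      have : q = a := by rw [← hTq, ha, Finset.sum_singleton, hwa, one_smul]
      rw [this]; exact hTsub (ha ▸ Finset.mem_singleton_self a)
    · right
      obtain ⟨a, ha, b, hb, hab⟩ := Finset.one_lt_card.1 hcard1
      exact ⟨a, hTsub ha, b, hTsub hb, hab, hzero a ha, hzero b hb⟩
  rcases hstruct with hqQ | ⟨a, haQ, b, hbQ, hab, hfa, hfb⟩
  · exact Or.inl ⟨q, hQP hqQ, hrpq⟩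
  -- Step 4: the line case
  right
  set L : AffineSubspace ℝ (EuclideanSpace ℝ (Fin 2)) :=
    affineSpan ℝ ({a, b} : Set (EuclideanSpace ℝ (Fin 2))) with hLdef
  have hba : b - a ≠ 0 := sub_ne_zero.2 (Ne.symm hab)
  have hfba : ⟪p - q, b - a⟫ = 0 := by
    have h : b - a = (b - q) - (a - q) := by abel
    rw [h, inner_sub_right, hfa, hfb, sub_zero]
  have hmemL : ∀ z : EuclideanSpace ℝ (Fin 2), ⟪p - q, z - q⟫ = 0 → z ∈ L := by
    intro z hz
    have hza : ⟪p - q, z - a⟫ = 0 := by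
      have h : z - a = (z - q) - (a - q) := by abel
      rw [h, inner_sub_right, hz, hfa, sub_zero]
    obtain ⟨c, hc⟩ := aux_orth_two_dim hu hba hfba hza
    have hmem := AffineMap.lineMap_mem_affineSpan_pair c a b (k := ℝ)
    have hzl : AffineMap.lineMap a b c = z := by
      rw [AffineMap.lineMap_apply]
      simp only [vsub_eq_sub, vadd_eq_add]
      rw [hc]; abel
    rwa [hzl] at hmem
  have hLf : ∀ z ∈ L, ⟪p - q, z - q⟫ = 0 := by
    intro z hz
    rw [show z = (z - a) +ᵥ a by simp] at hz
    rw [vadd_left_mem_affineSpan_pair] at hz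
    obtain ⟨r, hr⟩ := hz
    have h : z - q = r • (b - a) + (a - q) := by
      rw [vsub_eq_sub] at hr
      rw [hr]; abel
    rw [h, inner_add_right, real_inner_smul_right, hfba, hfa]; ring
  -- distance from p to the line is dist p q
  have hqL : q ∈ L := hmemL q (by simp)
  have hiL : infDist p (L : Set (EuclideanSpace ℝ (Fin 2))) = dist p q := by
    refine le_antisymm (infDist_le_dist_of_mem hqL) ?_
    rw [infDist_eq_iInf]
    haveI : Nonempty (L : Set (EuclideanSpace ℝ (Fin 2))) := ⟨⟨q, hqL⟩⟩
    refine le_ciInf fun z => ?_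
    have hz : ⟪p - q, (z : EuclideanSpace ℝ (Fin 2)) - q⟫ = 0 := hLf z z.2
    have hexp : p - (z : EuclideanSpace ℝ (Fin 2)) = (p - q) + (q - z) := by abel
    have hocos : ⟪p - q, q - (z : EuclideanSpace ℝ (Fin 2))⟫ = 0 := by
      have h : q - (z : EuclideanSpace ℝ (Fin 2)) = -((z : EuclideanSpace ℝ (Fin 2)) - q) := by
        abel
      rw [h, inner_neg_right, hz, neg_zero]
    have hpyth := norm_add_sq_real (p - q) (q - (z : EuclideanSpace ℝ (Fin 2)))
    rw [hocos] at hpyth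
    have h1 : dist p q = ‖p - q‖ := dist_eq_norm p q
    have h2 : dist p (z : EuclideanSpace ℝ (Fin 2)) = ‖p - (z : EuclideanSpace ℝ (Fin 2))‖ :=
      dist_eq_norm _ _
    rw [h1, h2, hexp]
    nlinarith [norm_nonneg (q - (z : EuclideanSpace ℝ (Fin 2))), norm_nonneg (p - q),
      norm_nonneg ((p - q) + (q - (z : EuclideanSpace ℝ (Fin 2))))]
  have hiL' : infDist p (L : Set (EuclideanSpace ℝ (Fin 2))) = infDist p C := by
    rw [hiL, hiC]
  refine ⟨a, hQP haQ, b, hQP hbQ, hab, by rw [← hLdef, hiL, hrpq], ?_⟩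
  -- the halfplane maximality property
  intro p' hp' hside
  rw [← hLdef]
  obtain ⟨y, hyC, hyd⟩ := hCcompact.exists_infDist_eq_dist hCne p'
  have hmaxC : infDist p' C ≤ infDist p C := hmax p' hp'
  set α := ⟪p - q, p' - q⟫ with hαdef
  set β := ⟪p - q, y - q⟫ with hβdef
  have hβ0 : β ≤ 0 := hobtuse y hyC
  by_cases hα : α = 0
  · rw [infDist_zero_of_mem (hmemL p' hα), hiL]
    exact dist_nonneg
  by_cases hβ : β = 0
  · calc infDist p' (L : Set (EuclideanSpace ℝ (Fin 2))) ≤ dist p' y :=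
          infDist_le_dist_of_mem (hmemL y hβ)
      _ = infDist p' C := hyd.symm
      _ ≤ infDist p C := hmaxC
      _ = _ := hiL'.symm
  have hβneg : β < 0 := lt_of_le_of_ne hβ0 hβ
  rcases lt_or_gt_of_ne hα with hαneg | hαpos
  · exfalso
    apply hside y hyC
    rw [← hLdef]
    have hnu : (0:ℝ) < ‖p - q‖^2 := by
      have h := norm_pos_iff.mpr hu
      positivity
    set s : ℝ := ‖p - q‖^2 with hsdef
    have hinner_u : ⟪p - q, p - q⟫ = s := real_inner_self_eq_norm_sq (p - q)
    set p₁ := p' - (α/s) • (p - q) with hp₁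
    set p₂ := y - (β/s) • (p - q) with hp₂
    have hp₁L : p₁ ∈ L := by
      apply hmemL
      have h : p₁ - q = (p' - q) - (α/s) • (p - q) := by rw [hp₁]; abel
      rw [h, inner_sub_right, real_inner_smul_right, hinner_u]
      field_simp [← hαdef]
      rw [← hαdef, sub_self]
    have hp₂L : p₂ ∈ L := by
      apply hmemL
      have h : p₂ - q = (y - q) - (β/s) • (p - q) := by rw [hp₂]; abel
      rw [h, inner_sub_right, real_inner_smul_right, hinner_u]
      field_simp [← hβdef]
      rw [← hβdef, sub_self]
    refine ⟨⟨p₁, hp₁L, p₂, hp₂L, ?_⟩, ?_, ?_⟩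
    · have h1 : p' -ᵥ p₁ = (α/s) • (p - q) := by rw [vsub_eq_sub, hp₁]; abel
      have h2 : y -ᵥ p₂ = (β/s) • (p - q) := by rw [vsub_eq_sub, hp₂]; abel
      rw [h1, h2]
      have hc2 : (β/s) ≠ 0 := div_ne_zero hβ (ne_of_gt hnu)
      have h3 : (α/s) • (p - q) = ((α/s)/(β/s)) • ((β/s) • (p - q)) := by
        rw [smul_smul]; congr 1; field_simp
      rw [h3]
      refine SameRay.sameRay_pos_smul_left _ ?_
      apply div_pos_iff.2
      right
      exact ⟨div_neg_of_neg_of_pos hαneg hnu, div_neg_of_neg_of_pos hβneg hnu⟩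
    · intro hmem; exact hα (hLf p' hmem)
    · intro hmem; exact hβ (hLf y hmem)
  · set t : ℝ := α / (α - β) with ht
    have hαβ : 0 < α - β := by linarith
    have ht0 : 0 < t := div_pos hαpos hαβ
    have ht1 : t ≤ 1 := by
      rw [ht, div_le_one hαβ]; linarith
    set z : EuclideanSpace ℝ (Fin 2) := p' + t • (y - p') with hz
    have hzL : z ∈ L := by
      apply hmemL
      have hyp' : y - p' = (y - q) - (p' - q) := by abel
      have h : z - q = (p' - q) + t • ((y - q) - (p' - q)) := by rw [hz, hyp']; abel
      have hval : ⟪p - q, z - q⟫ = α + t * (β - α) := by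
        simp only [h, inner_add_right, inner_sub_right, real_inner_smul_right, hαdef, hβdef]
      rw [hval, ht]
      field_simp
      ring
    have hd : dist p' z ≤ dist p' y := by
      have h1 : p' - z = -(t • (y - p')) := by rw [hz]; abel
      rw [dist_eq_norm, h1, norm_neg, norm_smul, dist_eq_norm, Real.norm_eq_abs,
        abs_of_pos ht0, norm_sub_rev p' y]
      nlinarith [norm_nonneg (y - p')]
    calc infDist p' (L : Set (EuclideanSpace ℝ (Fin 2))) ≤ dist p' z :=
          infDist_le_dist_of_mem hzL
      _ ≤ dist p' y := hd
      _ = infDist p' C := hyd.symm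
      _ ≤ infDist p C := hmaxC
      _ = _ := hiL'.symm
end

section
/- Sampling gap bound: Let S be a set of N ≤ n² real values and let Π be a multiset of m = c·n^{3/2}·log n values sampled independently and uniformly from S. Then, with probability at least 1 − 1/n^{Ω(c)}, every open interval between two consecutive values of Π (together with the intervals below the minimum and above the maximum of Π) contains at most O(√n) values of S. -/
open MeasureTheory

private lemma exists_block' (L : List ℝ) (hL : L.Pairwise (· ≤ ·)) (k : ℕ) (hk : 0 < k)
    (T : Finset ℝ) (x y : ℝ) (hT : ∀ a ∈ T, a ∈ L ∧ a ∈ Set.Ioo x y)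
    (hcard : 2 * k ≤ T.card) :
    ∃ j : ℕ, (j + 1) * k ≤ L.length ∧ ∀ a ∈ (L.drop (j * k)).take k, a ∈ Set.Ioo x y := by
  have hTne : T.Nonempty := Finset.card_pos.mp (by omega)
  set Tidx : Finset ℕ := T.image (fun a => L.idxOf a) with hTidx
  have hinj : Set.InjOn (fun a => L.idxOf a) T := by
    intro a ha b hb hab
    exact (List.idxOf_inj (hT a ha).1).mp hab
  have hcard' : Tidx.card = T.card := Finset.card_image_of_injOn hinj
  have hTidxne : Tidx.Nonempty := hTne.image _
  obtain ⟨a0, ha0⟩ : ∃ a, a = Tidx.min' hTidxne := ⟨_, rfl⟩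
  obtain ⟨b0, hb0⟩ : ∃ b, b = Tidx.max' hTidxne := ⟨_, rfl⟩
  have ha0mem : a0 ∈ Tidx := ha0 ▸ Tidx.min'_mem hTidxne
  have hb0mem : b0 ∈ Tidx := hb0 ▸ Tidx.max'_mem hTidxne
  have hsub : Tidx ⊆ Finset.Icc a0 b0 := fun i hi =>
    Finset.mem_Icc.mpr ⟨ha0 ▸ Tidx.min'_le i hi, hb0 ▸ Tidx.le_max' i hi⟩
  have hIcc : Tidx.card ≤ b0 + 1 - a0 := by
    simpa [Nat.card_Icc] using Finset.card_le_card hsub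
  have hab : a0 + 2 * k ≤ b0 + 1 := by omega
  have hget : ∀ q ∈ Tidx, ∃ hq : q < L.length, L[q] ∈ Set.Ioo x y := by
    intro q hq
    obtain ⟨t, ht, rfl⟩ := Finset.mem_image.mp hq
    have hmemL := (hT t ht).1
    have hlt : L.idxOf t < L.length := List.idxOf_lt_length_iff.mpr hmemL
    exact ⟨hlt, by rw [List.getElem_idxOf hlt]; exact (hT t ht).2⟩
  obtain ⟨ha0lt, ha0io⟩ := hget a0 ha0mem
  obtain ⟨hb0lt, hb0io⟩ := hget b0 hb0mem
  have hmem : ∀ i (hi : i < L.length), a0 ≤ i → i ≤ b0 → L[i] ∈ Set.Ioo x y := by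
    intro i hi h1 h2
    constructor
    · have : L[a0] ≤ L[i] := hL.rel_get_of_le (a := ⟨a0, ha0lt⟩) (b := ⟨i, hi⟩) h1
      exact lt_of_lt_of_le ha0io.1 this
    · have : L[i] ≤ L[b0] := hL.rel_get_of_le (a := ⟨i, hi⟩) (b := ⟨b0, hb0lt⟩) h2
      exact lt_of_le_of_lt this hb0io.2
  obtain ⟨j, r, hjr, hrk⟩ : ∃ j r, j * k + r = a0 + k - 1 ∧ r < k :=
    ⟨(a0 + k - 1) / k, (a0 + k - 1) % k,
      by rw [Nat.mul_comm]; exact Nat.div_add_mod _ _, Nat.mod_lt _ hk⟩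
  refine ⟨j, ?_, ?_⟩
  · rw [add_mul, one_mul]; omega
  · intro a ha
    obtain ⟨p, hp, rfl⟩ := List.getElem_of_mem ha
    have hp' : p < k := by
      have := hp
      simp only [List.length_take, List.length_drop] at this
      omega
    rw [List.getElem_take, List.getElem_drop]
    exact hmem _ _ (by omega) (by omega)

private lemma miss_block_prob' (S : Finset ℝ) (hS : S.Nonempty) (B : Finset ℝ) (hB : B ⊆ S)
    (m : ℕ) :
    (Measure.pi fun _ : Fin m => (PMF.uniformOfFinset S hS).toMeasure)
      {ω | ∀ i : Fin m, ω i ∉ (B : Set ℝ)}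
      = ENNReal.ofReal ((1 - (B.card : ℝ) / S.card) ^ m) := by
  set ν := (PMF.uniformOfFinset S hS).toMeasure with hν
  have hScard : 0 < (S.card : ℝ) := by exact_mod_cast Finset.card_pos.mpr hS
  have hBmeas : MeasurableSet (B : Set ℝ) := B.measurableSet
  have hνB : ν (B : Set ℝ) = ENNReal.ofReal ((B.card : ℝ) / S.card) := by
    rw [hν, PMF.toMeasure_uniformOfFinset_apply hS _ hBmeas]
    have hfil : S.filter (· ∈ (B : Set ℝ)) = B := by
      ext a; simp only [Finset.mem_filter, Finset.mem_coe]
      exact ⟨fun h => h.2, fun h => ⟨hB h, h⟩⟩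
    rw [Finset.filter_congr_decidable, hfil, ENNReal.ofReal_div_of_pos hScard]
    simp [ENNReal.ofReal_natCast]
  have : IsProbabilityMeasure ν := PMF.toMeasure.isProbabilityMeasure _
  have hcompl : ν ((B : Set ℝ)ᶜ) = ENNReal.ofReal (1 - (B.card : ℝ) / S.card) := by
    rw [prob_compl_eq_one_sub hBmeas, hνB, ← ENNReal.ofReal_one,
      ← ENNReal.ofReal_sub _ (by positivity)]
  have hset : {ω : Fin m → ℝ | ∀ i : Fin m, ω i ∉ (B : Set ℝ)}
      = Set.pi Set.univ (fun _ => (B : Set ℝ)ᶜ) := by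
    ext ω; simp [Set.mem_pi]
  have hr : (0:ℝ) ≤ 1 - (B.card : ℝ) / S.card := by
    have : (B.card : ℝ) ≤ S.card := by exact_mod_cast Finset.card_le_card hB
    have := div_le_one_of_le₀ this hScard.le
    linarith
  rw [hset, Measure.pi_pi, hcompl, Finset.prod_const, Finset.card_univ, Fintype.card_fin,
    ← ENNReal.ofReal_pow hr]

private lemma final_real_bound (n : ℕ) (hn : 2 ≤ n) (c : ℝ) (hc : 3 ≤ c)
    (N k t m : ℕ) (hNpos : 0 < N) (hN : N ≤ n ^ 2) (hkpos : 0 < k)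
    (hks : Real.sqrt n ≤ k) (htk : t * k ≤ N)
    (hm : c * (n : ℝ) ^ ((3 : ℝ) / 2) * Real.log n ≤ m) :
    (t : ℝ) * (1 - (k : ℝ) / N) ^ m ≤ (n : ℝ) ^ (-(1 / 2 * c)) := by
  have hnpos : (0:ℝ) < n := by positivity
  have hn1 : (1:ℝ) ≤ n := by exact_mod_cast Nat.one_le_of_lt hn
  have hNr : (0:ℝ) < N := by exact_mod_cast hNpos
  have hlogpos : 0 < Real.log n := Real.log_pos (by exact_mod_cast hn)
  have hsqrtpos : (0:ℝ) < Real.sqrt n := Real.sqrt_pos.mpr hnpos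
  rcases Nat.eq_zero_or_pos t with ht0 | htpos
  · rw [ht0]; simp; positivity
  have hkN : k ≤ N := le_trans (Nat.le_mul_of_pos_left k htpos) htk
  have hkNr : (k : ℝ) / N ≤ 1 := by
    rw [div_le_one hNr]; exact_mod_cast hkN
  have hr0 : (0:ℝ) ≤ 1 - (k : ℝ) / N := by linarith
  have hid : (n : ℝ) ^ ((3 : ℝ) / 2) * Real.sqrt n = (n : ℝ) ^ 2 := by
    rw [Real.sqrt_eq_rpow, ← Real.rpow_add hnpos]
    norm_num
  -- step 1 : (1 - k/N)^m ≤ exp (-(m * (k/N)))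
  have hstep1 : (1 - (k : ℝ) / N) ^ m ≤ Real.exp (-((m : ℝ) * ((k : ℝ) / N))) := by
    have h1 : 1 - (k : ℝ) / N ≤ Real.exp (-((k : ℝ) / N)) := by
      have := Real.add_one_le_exp (-((k : ℝ) / N)); linarith
    calc (1 - (k : ℝ) / N) ^ m ≤ (Real.exp (-((k : ℝ) / N))) ^ m :=
          pow_le_pow_left₀ hr0 h1 m
      _ = Real.exp (-((m : ℝ) * ((k : ℝ) / N))) := by
          rw [← Real.exp_nat_mul]; ring_nf
  -- step 2 : c * log n ≤ m * (k/N)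
  have hdiv : Real.sqrt n / (n : ℝ) ^ 2 ≤ (k : ℝ) / N := by
    apply div_le_div₀ (by positivity) hks hNr
    exact_mod_cast hN
  have hmnonneg : (0:ℝ) ≤ c * (n : ℝ) ^ ((3 : ℝ) / 2) * Real.log n := by positivity
  have hstep2 : c * Real.log n ≤ (m : ℝ) * ((k : ℝ) / N) := by
    have h2 : (c * (n : ℝ) ^ ((3 : ℝ) / 2) * Real.log n) * (Real.sqrt n / (n : ℝ) ^ 2)
        = c * Real.log n := by
      rw [div_eq_mul_inv]
      have hne : ((n : ℝ) ^ 2)⁻¹ * (n:ℝ)^2 = 1 := inv_mul_cancel₀ (by positivity)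
      calc c * (n : ℝ) ^ ((3 : ℝ) / 2) * Real.log n * (Real.sqrt n * ((n : ℝ) ^ 2)⁻¹)
          = c * Real.log n * (((n : ℝ) ^ ((3 : ℝ) / 2) * Real.sqrt n) * ((n : ℝ) ^ 2)⁻¹) := by
            ring
        _ = c * Real.log n := by rw [hid, mul_comm ((n:ℝ)^2), hne, mul_one]
    rw [← h2]
    exact mul_le_mul hm hdiv (by positivity) (le_trans hmnonneg hm)
  -- step 3 : exp bound gives r^m ≤ n^(-c)
  have hstep3 : (1 - (k : ℝ) / N) ^ m ≤ (n : ℝ) ^ (-c) := by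
    refine hstep1.trans ?_
    rw [Real.rpow_def_of_pos hnpos]
    apply Real.exp_le_exp.mpr
    nlinarith [hstep2]
  -- step 4 : t ≤ n^(3/2)
  have hstep4 : (t : ℝ) ≤ (n : ℝ) ^ ((3 : ℝ) / 2) := by
    have h1 : (t : ℝ) * Real.sqrt n ≤ (n : ℝ) ^ ((3 : ℝ) / 2) * Real.sqrt n := by
      calc (t : ℝ) * Real.sqrt n ≤ (t : ℝ) * (k : ℝ) :=
            mul_le_mul_of_nonneg_left hks (by positivity)
        _ ≤ (N : ℝ) := by exact_mod_cast htk
        _ ≤ ((n : ℝ) ^ 2) := by exact_mod_cast hN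
        _ = (n : ℝ) ^ ((3 : ℝ) / 2) * Real.sqrt n := hid.symm
    exact le_of_mul_le_mul_right h1 hsqrtpos
  calc (t : ℝ) * (1 - (k : ℝ) / N) ^ m
      ≤ (n : ℝ) ^ ((3 : ℝ) / 2) * (n : ℝ) ^ (-c) :=
        mul_le_mul hstep4 hstep3 (pow_nonneg hr0 m) (by positivity)
    _ = (n : ℝ) ^ ((3 : ℝ) / 2 + -c) := (Real.rpow_add hnpos _ _).symm
    _ ≤ (n : ℝ) ^ (-(1 / 2 * c)) := by
        apply Real.rpow_le_rpow_of_exponent_le hn1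
        linarith


/-- Sampling gap bound: there are constants `c₀, C, γ > 0` such that for any `n ≥ 2`, any
nonempty set `S` of at most `n²` reals, any `c ≥ c₀` and `m = ⌈c n^{3/2} log n⌉` i.i.d.
uniform samples from `S`, the probability that some open interval containing no sample
contains more than `C √n` values of `S` is at most `n^{-γ c}`. (Open intervals containing
no sample include the gaps between consecutive sorted samples as well as the intervals
below the minimum and above the maximum sample.) -/
theorem sampling_gap_bound :
    ∃ c₀ C γ : ℝ, 0 < c₀ ∧ 0 < C ∧ 0 < γ ∧
      ∀ n : ℕ, 2 ≤ n →
      ∀ S : Finset ℝ, ∀ hS : S.Nonempty, S.card ≤ n ^ 2 →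
      ∀ c : ℝ, c₀ ≤ c →
      ∀ m : ℕ, m = ⌈c * (n : ℝ) ^ ((3 : ℝ) / 2) * Real.log n⌉₊ →
      (Measure.pi fun _ : Fin m => (PMF.uniformOfFinset S hS).toMeasure)
          {ω | ∃ x y : ℝ, (∀ i : Fin m, ω i ∉ Set.Ioo x y) ∧
            C * Real.sqrt n < (((S : Set ℝ) ∩ Set.Ioo x y).ncard : ℝ)}
        ≤ ENNReal.ofReal ((n : ℝ) ^ (-(γ * c))) := by
  classical
  refine ⟨3, 4, 1/2, by norm_num, by norm_num, by norm_num, ?_⟩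
  intro n hn S hS hScard c hc m hm
  have hnpos : (0:ℝ) < n := by positivity
  have hsqrtpos : (0:ℝ) < Real.sqrt n := Real.sqrt_pos.mpr hnpos
  set k := ⌈Real.sqrt n⌉₊ with hkdef
  have hkpos : 0 < k := Nat.ceil_pos.mpr hsqrtpos
  set L := S.sort (· ≤ ·) with hLdef
  have hLlen : L.length = S.card := S.length_sort _
  have hLsorted : L.Pairwise (· ≤ ·) := S.pairwise_sort _
  have hLnodup : L.Nodup := S.sort_nodup _
  set N := S.card with hNdef
  have hNpos : 0 < N := Finset.card_pos.mpr hS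
  set t := N / k with htdef
  set B : ℕ → Finset ℝ := fun j => ((L.drop (j * k)).take k).toFinset with hBdef
  have hBsub : ∀ j, B j ⊆ S := by
    intro j a ha
    simp only [hBdef, List.mem_toFinset] at ha
    have haL : a ∈ L := List.mem_of_mem_drop (List.mem_of_mem_take ha)
    rwa [hLdef, Finset.mem_sort] at haL
  have hBcard : ∀ j < t, (B j).card = k := by
    intro j hj
    have hjk : (j + 1) * k ≤ N := by
      have : j + 1 ≤ N / k := hj
      exact (Nat.le_div_iff_mul_le hkpos).mp this
    have hsl : ((L.drop (j * k)).take k).Sublist L :=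
      (List.take_sublist _ _).trans (List.drop_sublist _ _)
    have hnd : ((L.drop (j * k)).take k).Nodup := hLnodup.sublist hsl
    rw [hBdef]
    simp only [List.toFinset_card_of_nodup hnd, List.length_take, List.length_drop, hLlen]
    have : (j + 1) * k = j * k + k := by ring
    omega
  set A : ℕ → Set (Fin m → ℝ) := fun j => {ω | ∀ i : Fin m, ω i ∉ (↑(B j) : Set ℝ)} with hAdef
  have hsub : {ω : Fin m → ℝ | ∃ x y : ℝ, (∀ i : Fin m, ω i ∉ Set.Ioo x y) ∧
      4 * Real.sqrt n < (((S : Set ℝ) ∩ Set.Ioo x y).ncard : ℝ)}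
      ⊆ ⋃ j ∈ Finset.range t, A j := by
    rintro ω ⟨x, y, hmiss, hbig⟩
    set T := S.filter (fun a => a ∈ Set.Ioo x y) with hTdef
    have hTcoe : (S : Set ℝ) ∩ Set.Ioo x y = (T : Set ℝ) := by
      ext a
      simp [hTdef, Set.mem_Ioo, and_comm]
    have hTcard : (((S : Set ℝ) ∩ Set.Ioo x y).ncard : ℝ) = (T.card : ℝ) := by
      rw [hTcoe, Set.ncard_coe_finset]
    have h2k : 2 * k ≤ T.card := by
      have hceil : (k : ℝ) < Real.sqrt n + 1 := Nat.ceil_lt_add_one hsqrtpos.le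
      have h1 : (1:ℝ) ≤ Real.sqrt n := by
        rw [show (1:ℝ) = Real.sqrt 1 by simp]
        exact Real.sqrt_le_sqrt (by exact_mod_cast Nat.one_le_of_lt hn)
      rw [hTcard] at hbig
      have : ((2 * k : ℕ) : ℝ) < (T.card : ℝ) := by push_cast; nlinarith
      exact_mod_cast this.le
    have hT : ∀ a ∈ T, a ∈ L ∧ a ∈ Set.Ioo x y := by
      intro a ha
      rw [hTdef, Finset.mem_filter] at ha
      exact ⟨by rw [hLdef, Finset.mem_sort]; exact ha.1, ha.2⟩
    obtain ⟨j, hjlen, hjIoo⟩ := exists_block' L hLsorted k hkpos T x y hT h2k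
    have hjt : j ∈ Finset.range t := by
      rw [Finset.mem_range, htdef]
      have : (j + 1) * k ≤ N := by rwa [hLlen] at hjlen
      have := (Nat.le_div_iff_mul_le hkpos).mpr this
      omega
    refine Set.mem_biUnion hjt ?_
    intro i hi
    simp only [hBdef, Finset.coe_sort_coe, List.coe_toFinset, Set.mem_setOf_eq] at hi
    exact hmiss i (hjIoo _ hi)
  calc (Measure.pi fun _ : Fin m => (PMF.uniformOfFinset S hS).toMeasure)
        {ω | ∃ x y : ℝ, (∀ i : Fin m, ω i ∉ Set.Ioo x y) ∧
          4 * Real.sqrt n < (((S : Set ℝ) ∩ Set.Ioo x y).ncard : ℝ)}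
      ≤ (Measure.pi fun _ : Fin m => (PMF.uniformOfFinset S hS).toMeasure)
          (⋃ j ∈ Finset.range t, A j) := measure_mono hsub
    _ ≤ ∑ j ∈ Finset.range t,
        (Measure.pi fun _ : Fin m => (PMF.uniformOfFinset S hS).toMeasure) (A j) :=
          measure_biUnion_finset_le _ _
    _ = ∑ _j ∈ Finset.range t, ENNReal.ofReal ((1 - (k : ℝ) / N) ^ m) := by
        refine Finset.sum_congr rfl fun j hj => ?_
        rw [hAdef]
        rw [miss_block_prob' S hS (B j) (hBsub j) m, hBcard j (Finset.mem_range.mp hj)]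
    _ = (t : ENNReal) * ENNReal.ofReal ((1 - (k : ℝ) / N) ^ m) := by
        rw [Finset.sum_const, Finset.card_range, nsmul_eq_mul]
    _ = ENNReal.ofReal ((t : ℝ) * (1 - (k : ℝ) / N) ^ m) := by
        rw [← ENNReal.ofReal_natCast t, ← ENNReal.ofReal_mul (by positivity)]
    _ ≤ ENNReal.ofReal ((n : ℝ) ^ (-(1 / 2 * c))) := by
        apply ENNReal.ofReal_le_ofReal
        refine final_real_bound n hn c hc N k t m hNpos hScard hkpos (Nat.le_ceil _)
          (Nat.div_mul_le_self N k) ?_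
        rw [hm]
        exact Nat.le_ceil _
end
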